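/- arXiv:1807.10229 — 3 statements merged into one kernel-verified Lean document; each statement's English description precedes it below -/
import Mathlib

section
/- Let N ≥ 1 and ε_0,...,ε_N ∈ [0,1) with ε_N < 1. Define π_i = c·∏_{k=0}^{i-1} ε_k for 0 ≤ i ≤ N-1 and π_N = c·(∏_{k=0}^{N-1} ε_k)/(1-ε_N), where c > 0 is the normalization constant making ∑_{i=0}^N π_i = 1. Then π = (π_0,...,π_N) is a stationary distribution of the Markov chain with transition matrix A, i.e., π_j = ∑_{i=0}^N A(i,j)·π_i for every j. -/
/-- The vector `π` with `π i = c·∏_{k<i} ε k` for `i < N` and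
`π N = c·(∏_{k<N} ε k)/(1-ε N)`, normalized by `c > 0`, is a stationary
distribution of the chain with transition matrix `A`. -/
theorem stationary_distribution_of_chain
    (N : ℕ) (hN : 1 ≤ N) (ε : ℕ → ℝ) (hε : ∀ i ≤ N, ε i ∈ Set.Ico (0:ℝ) 1)
    (c : ℝ) (hc : 0 < c)
    (A : Fin (N + 1) → Fin (N + 1) → ℝ)
    (hA : A = fun (i j : Fin (N + 1)) =>
      if j = 0 then 1 - ε (i : ℕ)
      else if (j : ℕ) = (i : ℕ) + 1 then ε (i : ℕ)
      else if i = Fin.last N ∧ j = Fin.last N then ε (i : ℕ)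
      else 0)
    (π : Fin (N + 1) → ℝ)
    (hπ : π = fun (i : Fin (N + 1)) =>
      if (i : ℕ) < N then c * ∏ k ∈ Finset.range (i : ℕ), ε k
      else c * (∏ k ∈ Finset.range N, ε k) / (1 - ε N))
    (hnorm : ∑ i, π i = 1) :
    ∀ j, π j = ∑ i, A i j * π i := by
  obtain ⟨M, rfl⟩ : ∃ M, N = M + 1 := ⟨N - 1, (Nat.succ_pred_eq_of_pos hN).symm⟩
  subst hA hπ
  have hεN : ε (M+1) < 1 := (hε (M+1) le_rfl).2
  have hne : (1:ℝ) - ε (M+1) ≠ 0 := by linarith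
  set P : ℕ → ℝ := fun i => if i < M+1 then c * ∏ k ∈ Finset.range i, ε k
      else c * (∏ k ∈ Finset.range (M+1), ε k) / (1 - ε (M+1)) with hPdef
  have hsum : ∑ i ∈ Finset.range (M+2), P i = 1 := by
    rw [← Fin.sum_univ_eq_sum_range P (M+2)]
    exact hnorm
  have hstep : ∀ i < M, ε i * P i = P (i+1) := by
    intro i hi
    have h1 : i < M+1 := by omega
    have h2 : i+1 < M+1 := by omega
    simp only [hPdef, if_pos h1, if_pos h2, Finset.prod_range_succ]
    ring
  have hMstep : ε M * P M + ε (M+1) * P (M+1) = P (M+1) := by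
    have h1 : M < M+1 := by omega
    have h2 : ¬ (M+1 < M+1) := by omega
    simp only [hPdef, if_pos h1, if_neg h2, Finset.prod_range_succ]
    field_simp
    ring
  have hP0 : P 0 = c := by simp [hPdef]
  have hT : ∑ i ∈ Finset.range (M+2), ε i * P i = 1 - c := by
    have e1 : ∑ i ∈ Finset.range M, ε i * P i = ∑ i ∈ Finset.range M, P (i+1) :=
      Finset.sum_congr rfl (fun i hi => hstep i (Finset.mem_range.mp hi))
    have e2 : ∑ i ∈ Finset.range (M+2), P i
        = ∑ i ∈ Finset.range (M+1), P (i+1) + P 0 :=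
      Finset.sum_range_succ' P (M+1)
    rw [Finset.sum_range_succ, Finset.sum_range_succ, e1]
    rw [e2, Finset.sum_range_succ, hP0] at hsum
    linarith [hMstep]
  intro j
  have hj : (j : ℕ) < M + 2 := j.isLt
  have hrew : (∑ i : Fin (M+2),
      (if j = 0 then 1 - ε (i:ℕ) else if (j:ℕ) = (i:ℕ)+1 then ε (i:ℕ)
        else if i = Fin.last (M+1) ∧ j = Fin.last (M+1) then ε (i:ℕ) else 0) * P (i:ℕ))
      = ∑ i ∈ Finset.range (M+2),
      (if (j:ℕ) = 0 then 1 - ε i else if (j:ℕ) = i+1 then ε i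
        else if i = M+1 ∧ (j:ℕ) = M+1 then ε i else 0) * P i := by
    rw [← Fin.sum_univ_eq_sum_range (fun i =>
      (if (j:ℕ) = 0 then 1 - ε i else if (j:ℕ) = i+1 then ε i
        else if i = M+1 ∧ (j:ℕ) = M+1 then ε i else 0) * P i) (M+2)]
    refine Finset.sum_congr rfl fun i _ => ?_
    simp only [Fin.ext_iff, Fin.val_zero, Fin.val_last]
  show P (j:ℕ) = ∑ i : Fin (M+2),
      (if j = 0 then 1 - ε (i:ℕ) else if (j:ℕ) = (i:ℕ)+1 then ε (i:ℕ)
        else if i = Fin.last (M+1) ∧ j = Fin.last (M+1) then ε (i:ℕ) else 0) * P (i:ℕ)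
  rw [hrew]
  rcases Nat.lt_or_ge (j:ℕ) (M+1) with hlt | hge
  · rcases Nat.eq_zero_or_pos (j:ℕ) with h0 | hpos
    · rw [h0]
      have expand : ∀ i ∈ Finset.range (M+2),
          (if (0:ℕ) = 0 then 1 - ε i else if (0:ℕ) = i+1 then ε i
            else if i = M+1 ∧ (0:ℕ) = M+1 then ε i else 0) * P i
          = P i - ε i * P i := by
        intro i _
        rw [if_pos rfl]
        ring
      rw [Finset.sum_congr rfl expand, Finset.sum_sub_distrib, hsum, hT, hP0]
      ring
    · obtain ⟨m, hm⟩ : ∃ m, (j:ℕ) = m+1 := ⟨(j:ℕ)-1, by omega⟩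
      rw [hm]
      have hsummand : ∀ i ∈ Finset.range (M+2),
          (if m+1 = 0 then 1 - ε i else if m+1 = i+1 then ε i
            else if i = M+1 ∧ m+1 = M+1 then ε i else 0) * P i
          = if i = m then ε i * P i else 0 := by
        intro i _
        have h0' : ¬ (m+1 = 0) := by omega
        by_cases he : i = m
        · subst he
          simp [h0']
        · have h1 : ¬ (m+1 = i+1) := by omega
          have h2 : ¬ (i = M+1 ∧ m+1 = M+1) := by omega
          simp only [h0', h1, he, if_false]
          rw [if_neg h2]
          ring
      rw [Finset.sum_congr rfl hsummand, Finset.sum_ite_eq' (Finset.range (M+2)) m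
        (fun i => ε i * P i)]
      have hmem : m ∈ Finset.range (M+2) := Finset.mem_range.mpr (by omega)
      rw [if_pos hmem]
      exact (hstep m (by omega)).symm
  · have hMp : (j:ℕ) = M+1 := by omega
    rw [hMp]
    rw [Finset.sum_range_succ, Finset.sum_range_succ]
    have hz : ∀ i ∈ Finset.range M,
        (if M+1 = 0 then 1 - ε i else if M+1 = i+1 then ε i
          else if i = M+1 ∧ M+1 = M+1 then ε i else 0) * P i = 0 := by
      intro i hi
      have hiM := Finset.mem_range.mp hi
      have h0' : ¬ (M+1 = 0) := by omega
      have h1 : ¬ (M+1 = i+1) := by omega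
      have h2 : ¬ (i = M+1) := by omega
      simp [h0', h1, h2, hiM.ne']
    rw [Finset.sum_congr rfl hz, Finset.sum_const_zero]
    have h0' : ¬ (M+1 = 0) := by omega
    have hb : ¬ (M+1 = M+1+1) := by omega
    simp only [h0', if_false, if_pos rfl, hb, and_self, if_true]
    linarith [hMstep]
end

section
/- The function g(ε) = 1/(-ln(1-ε)) = -1/ln(1-ε) is convex on the interval (0, 1 - e^{-2}). -/
open Real Set Filter

private lemma g1_hasDerivAt {x : ℝ} (h0 : 0 < 1 - x) (hL : Real.log (1 - x) ≠ 0) :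
    HasDerivAt (fun ε : ℝ => -1 / ((1 - ε) * (Real.log (1 - ε))^2))
      ((-(Real.log (1-x))^2 - 2 * Real.log (1-x)) / ((1 - x) * (Real.log (1 - x))^2)^2) x := by
  have ha : HasDerivAt (fun ε : ℝ => 1 - ε) (-1) x := by
    simpa using (hasDerivAt_id x).const_sub 1
  have hb : HasDerivAt (fun ε : ℝ => Real.log (1 - ε)) (-1 / (1 - x)) x := ha.log h0.ne'
  have hp : HasDerivAt (fun ε : ℝ => (Real.log (1 - ε))^2)
      (2 * (Real.log (1-x))^1 * (-1 / (1 - x))) x := hb.pow 2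
  have hw : HasDerivAt (fun ε : ℝ => (1 - ε) * (Real.log (1 - ε))^2)
      ((-1) * (Real.log (1-x))^2 + (1 - x) * (2 * (Real.log (1-x))^1 * (-1 / (1 - x)))) x :=
    ha.mul hp
  have hwne : (1 - x) * (Real.log (1 - x))^2 ≠ 0 :=
    mul_ne_zero h0.ne' (pow_ne_zero _ hL)
  have hc := (hw.inv hwne).neg
  have hfun : (fun ε : ℝ => -1 / ((1 - ε) * (Real.log (1 - ε))^2)) =
      fun ε : ℝ => -((1 - ε) * (Real.log (1 - ε))^2)⁻¹ := by
    funext ε; rw [neg_div, one_div]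
  rw [hfun]
  refine hc.congr_deriv ?_
  field_simp
  ring

private lemma f_hasDerivAt {x : ℝ} (h0 : 0 < 1 - x) (hL : Real.log (1 - x) ≠ 0) :
    HasDerivAt (fun ε : ℝ => -1 / Real.log (1 - ε))
      (-1 / ((1 - x) * (Real.log (1 - x))^2)) x := by
  have ha : HasDerivAt (fun ε : ℝ => 1 - ε) (-1) x := by
    simpa using (hasDerivAt_id x).const_sub 1
  have hb : HasDerivAt (fun ε : ℝ => Real.log (1 - ε)) (-1 / (1 - x)) x := ha.log h0.ne'
  have hc := (hb.inv hL).neg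
  have hfun : (fun ε : ℝ => -1 / Real.log (1 - ε)) =
      fun ε : ℝ => -(Real.log (1 - ε))⁻¹ := by
    funext ε; rw [neg_div, one_div]
  rw [hfun]
  refine hc.congr_deriv ?_
  field_simp

/-- The function `g(ε) = -1/ln(1-ε)` is convex on `(0, 1 - e⁻²)`. -/
theorem inv_neg_log_convex :
    ConvexOn ℝ (Set.Ioo (0:ℝ) (1 - Real.exp (-2)))
      (fun ε : ℝ => -1 / Real.log (1 - ε)) := by
  set s : Set ℝ := Set.Ioo (0:ℝ) (1 - Real.exp (-2)) with hs
  have hopen : IsOpen s := isOpen_Ioo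
  have hmem : ∀ x ∈ s, 0 < 1 - x ∧ 1 - x < 1 ∧ -2 < Real.log (1 - x) ∧ Real.log (1 - x) < 0 := by
    intro x hx
    obtain ⟨hx0, hx1⟩ := hx
    have h1 : Real.exp (-2) < 1 - x := by linarith
    have h2 : 1 - x < 1 := by linarith
    have h0 : 0 < 1 - x := lt_trans (Real.exp_pos _) h1
    refine ⟨h0, h2, ?_, Real.log_neg h0 h2⟩
    calc (-2:ℝ) = Real.log (Real.exp (-2)) := (Real.log_exp _).symm
      _ < Real.log (1 - x) := Real.log_lt_log (Real.exp_pos _) h1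
  have hderiv : ∀ x ∈ s, deriv (fun ε : ℝ => -1 / Real.log (1 - ε)) x
      = -1 / ((1 - x) * (Real.log (1 - x))^2) := by
    intro x hx
    obtain ⟨h0, _, _, hL0⟩ := hmem x hx
    exact (f_hasDerivAt h0 hL0.ne).deriv
  have hEq : ∀ x ∈ s, deriv (fun ε : ℝ => -1 / Real.log (1 - ε))
      =ᶠ[nhds x] fun ε : ℝ => -1 / ((1 - ε) * (Real.log (1 - ε))^2) := by
    intro x hx
    exact eventually_of_mem (hopen.mem_nhds hx) hderiv
  apply convexOn_of_deriv2_nonneg (convex_Ioo _ _)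
  · -- continuity
    apply ContinuousOn.div continuousOn_const
    · apply ContinuousOn.log
      · exact continuousOn_const.sub continuousOn_id
      · intro x hx; exact (hmem x hx).1.ne'
    · intro x hx; exact (hmem x hx).2.2.2.ne
  · rw [hopen.interior_eq]
    intro x hx
    obtain ⟨h0, _, _, hL0⟩ := hmem x hx
    exact (f_hasDerivAt h0 hL0.ne).differentiableAt.differentiableWithinAt
  · rw [hopen.interior_eq]
    intro x hx
    obtain ⟨h0, _, _, hL0⟩ := hmem x hx
    have hd2 := (g1_hasDerivAt h0 hL0.ne).differentiableAt
    exact (hd2.congr_of_eventuallyEq (hEq x hx)).differentiableWithinAt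
  · rw [hopen.interior_eq]
    intro x hx
    obtain ⟨h0, _, hL2, hL0⟩ := hmem x hx
    have h2 : deriv^[2] (fun ε : ℝ => -1 / Real.log (1 - ε)) x
        = deriv (deriv (fun ε : ℝ => -1 / Real.log (1 - ε))) x := rfl
    rw [h2, (hEq x hx).deriv_eq, (g1_hasDerivAt h0 hL0.ne).deriv]
    set L := Real.log (1 - x)
    have hnum : 0 < -L^2 - 2*L := by nlinarith
    have hden : 0 < ((1 - x) * L^2)^2 :=
      pow_pos (mul_pos h0 (pow_two_pos_of_ne_zero hL0.ne)) 2
    have : (0:ℝ) ≤ (-L^2 - 2*L) / ((1 - x) * L^2)^2 := div_nonneg hnum.le hden.le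
    simpa using this
end

section
/- Let γ ∈ (0,1), ε_out ∈ [0, γ], R > 0, R_min ∈ (0, R], and define ε_0 = (1-ε_out)γ/(1-γ) (assuming γ(2-ε_out) < 1), π_0 = (1-ε_out)/(1+ε_0-ε_out), π_1 = ε_0/(1+ε_0-ε_out), R_0 = (R - R_min π_1)/π_0, P_0 = (2^{R_0}-1)/(-ln(1-ε_0)), and P_1 = (2^{R_min}-1)/(-ln(1-ε_out)) (with ε_out > 0). Then the allocation satisfies all constraints: R_0 π_0 + R_min π_1 = R, ε_0 π_0 + ε_out π_1 = γ, ε_1 = ε_out ≤ ε_out, and the outage probabilities induced by (P_0, R_0) and (P_1, R_min) over the unit-mean Rayleigh channel are exactly ε_0 and ε_out respectively. -/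
/-- The closed-form `N = 1` variable-rate allocation satisfies all constraints:
average rate met with equality, average drop rate equal to `γ`, state-1 outage
at most `ε_out`, and the powers `(P₀, P₁)` induce outages exactly `ε₀, ε_out`. -/
theorem closed_form_allocation_feasible
    (γ εout R Rmin : ℝ)
    (hγ : γ ∈ Set.Ioo (0:ℝ) 1) (houtpos : 0 < εout) (hout : εout ≤ γ)
    (hfeas : γ * (2 - εout) < 1)
    (hR : 0 < R) (hRmin : 0 < Rmin) (hRminR : Rmin ≤ R)
    (ε0 π0 π1 R0 P0 P1 : ℝ)
    (hε0 : ε0 = (1 - εout) * γ / (1 - γ))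
    (hπ0 : π0 = (1 - εout) / (1 + ε0 - εout))
    (hπ1 : π1 = ε0 / (1 + ε0 - εout))
    (hR0 : R0 = (R - Rmin * π1) / π0)
    (hP0 : P0 = ((2:ℝ) ^ R0 - 1) / (-Real.log (1 - ε0)))
    (hP1 : P1 = ((2:ℝ) ^ Rmin - 1) / (-Real.log (1 - εout))) :
    R0 * π0 + Rmin * π1 = R ∧
    ε0 * π0 + εout * π1 = γ ∧
    εout ≤ εout ∧
    1 - Real.exp (-((2:ℝ) ^ R0 - 1) / P0) = ε0 ∧
    1 - Real.exp (-((2:ℝ) ^ Rmin - 1) / P1) = εout := by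
  obtain ⟨hγ0, hγ1⟩ := hγ
  have h1γ : 0 < 1 - γ := by linarith
  have hεout1 : εout < 1 := lt_of_le_of_lt hout hγ1
  have hε0pos : 0 < ε0 := by
    rw [hε0]; exact div_pos (mul_pos (by linarith) hγ0) h1γ
  have hε01 : ε0 < 1 := by
    rw [hε0, div_lt_one h1γ]; nlinarith
  have hden : 0 < 1 + ε0 - εout := by linarith
  have hπ0pos : 0 < π0 := by rw [hπ0]; exact div_pos (by linarith) hden
  have hπ1pos : 0 < π1 := by rw [hπ1]; exact div_pos hε0pos hden
  have hπ1lt : π1 < 1 := by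
    rw [hπ1, div_lt_one hden]; linarith
  have hR0pos : 0 < R0 := by
    rw [hR0]
    apply div_pos _ hπ0pos
    nlinarith
  have hpow0 : (1:ℝ) < (2:ℝ) ^ R0 :=
    (Real.one_lt_rpow_iff_of_pos (x := (2:ℝ)) (y := R0) (by norm_num)).mpr
      (Or.inl ⟨by norm_num, hR0pos⟩)
  have hpow1 : (1:ℝ) < (2:ℝ) ^ Rmin :=
    (Real.one_lt_rpow_iff_of_pos (x := (2:ℝ)) (y := Rmin) (by norm_num)).mpr
      (Or.inl ⟨by norm_num, hRmin⟩)
  have hlog0 : Real.log (1 - ε0) < 0 :=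
    Real.log_neg (by linarith) (by linarith)
  have hlog1 : Real.log (1 - εout) < 0 :=
    Real.log_neg (by linarith) (by linarith)
  refine ⟨?_, ?_, le_refl _, ?_, ?_⟩
  · rw [hR0]; field_simp; ring
  · have hkey : ε0 * (1 - γ) = (1 - εout) * γ := by
      rw [hε0]; field_simp
    rw [hπ0, hπ1]
    field_simp
    linear_combination hkey
  · rw [hP0]
    have h2 : (2:ℝ) ^ R0 - 1 ≠ 0 := by linarith
    rw [show -((2:ℝ) ^ R0 - 1) / (((2:ℝ) ^ R0 - 1) / (-Real.log (1 - ε0)))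
        = Real.log (1 - ε0) from by field_simp]
    rw [Real.exp_log (by linarith)]; ring
  · rw [hP1]
    have h2 : (2:ℝ) ^ Rmin - 1 ≠ 0 := by linarith
    rw [show -((2:ℝ) ^ Rmin - 1) / (((2:ℝ) ^ Rmin - 1) / (-Real.log (1 - εout)))
        = Real.log (1 - εout) from by field_simp]
    rw [Real.exp_log (by linarith)]; ring
end
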